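/- Let ℍ be a quaternion algebra over F with standard basis {1, i, j, k}, i² = −α, and F₁ = F(i). For the one-dimensional right skew-hermitian space V = ℍ with form ⟨x, y⟩ = x̄·i·y, the unitary group U(V) equals SL₁(F₁) = { x ∈ F₁^× : N_{F₁/F}(x) = 1 }, and the similitude group GU(V) equals F₁^× ∪ F₁^×·j. -/

import Mathlib

open scoped Quaternion

/-- Let `ℍ = (−α, −β / F)` with standard basis `1, i, j, k` (`i² = −α`, `j² = −β`),
`F₁ = F(i)`, and let `V = ℍ` be the one-dimensional right skew-hermitian space with form
`⟨x, y⟩ = x̄·i·y`.  Then `U(V) = SL₁(F₁) = { x ∈ F₁^× : N_{F₁/F}(x) = 1 }` and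
`GU(V) = F₁^× ∪ F₁^×·j`. -/
theorem unitary_one_dim_skew_hermitian (F : Type*) [Field F] (h2 : (2 : F) ≠ 0)
    (α β : F) (hα : α ≠ 0) (hβ : β ≠ 0)
    (hdiv : ∀ x : ℍ[F,-α,-β], x ≠ 0 → IsUnit x) :
    (∀ g : ℍ[F,-α,-β], g ≠ 0 →
      ((star g * (⟨0, 1, 0, 0⟩ : ℍ[F,-α,-β]) * g = (⟨0, 1, 0, 0⟩ : ℍ[F,-α,-β])) ↔
        (g.imJ = 0 ∧ g.imK = 0 ∧ g * star g = 1)))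
    ∧ (∀ g : ℍ[F,-α,-β], g ≠ 0 →
      ((∃ μ : F, μ ≠ 0 ∧
          star g * (⟨0, 1, 0, 0⟩ : ℍ[F,-α,-β]) * g
            = (μ : ℍ[F,-α,-β]) * (⟨0, 1, 0, 0⟩ : ℍ[F,-α,-β])) ↔
        ((g.imJ = 0 ∧ g.imK = 0) ∨ (g.re = 0 ∧ g.imI = 0)))) := by
  -- key division-algebra fact: x² + α y² = 0 forces x = y = 0
  have key : ∀ x y : F, x ^ 2 + α * y ^ 2 = 0 → x = 0 ∧ y = 0 := by
    intro x y h
    by_cases hq : (⟨x, y, 0, 0⟩ : ℍ[F,-α,-β]) = 0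
    · rw [QuaternionAlgebra.ext_iff] at hq
      simp only [QuaternionAlgebra.re_zero, QuaternionAlgebra.imI_zero] at hq
      exact ⟨hq.1, hq.2.1⟩
    · have hu := hdiv _ hq
      have hz : (⟨x, y, 0, 0⟩ : ℍ[F,-α,-β]) * star (⟨x, y, 0, 0⟩ : ℍ[F,-α,-β]) = 0 := by
        rw [QuaternionAlgebra.ext_iff]
        simp only [QuaternionAlgebra.re_mul, QuaternionAlgebra.imI_mul,
          QuaternionAlgebra.imJ_mul, QuaternionAlgebra.imK_mul, QuaternionAlgebra.star_mk,
          QuaternionAlgebra.re_zero, QuaternionAlgebra.imI_zero, QuaternionAlgebra.imJ_zero,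
          QuaternionAlgebra.imK_zero]
        refine ⟨by linear_combination h, by ring, by ring, by ring⟩
      have := (hu.mul_right_eq_zero).mp hz
      rw [QuaternionAlgebra.ext_iff] at this
      simp only [QuaternionAlgebra.star_mk, QuaternionAlgebra.re_zero,
        QuaternionAlgebra.imI_zero, QuaternionAlgebra.imJ_zero,
        QuaternionAlgebra.imK_zero] at this
      exact ⟨by linear_combination this.1, neg_eq_zero.mp this.2.1⟩
  constructor
  · rintro ⟨a, b, c, d⟩ hg
    simp only [QuaternionAlgebra.ext_iff, QuaternionAlgebra.re_mul, QuaternionAlgebra.imI_mul,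
      QuaternionAlgebra.imJ_mul, QuaternionAlgebra.imK_mul, QuaternionAlgebra.star_mk,
      QuaternionAlgebra.re_one, QuaternionAlgebra.imI_one, QuaternionAlgebra.imJ_one,
      QuaternionAlgebra.imK_one]
    constructor
    · rintro ⟨h0, h1, h2', h3⟩
      ring_nf at h1 h2' h3
      have hc' : (2 : F) * (c * (a ^ 2 + α * b ^ 2)) = 0 := by
        linear_combination a * h3 + b * h2'
      have hd' : (2 : F) * (α * (d * (a ^ 2 + α * b ^ 2))) = 0 := by
        linear_combination α * b * h3 - a * h2'
      have hc : c * (a ^ 2 + α * b ^ 2) = 0 := (mul_eq_zero.mp hc').resolve_left h2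
      have hd : d * (a ^ 2 + α * b ^ 2) = 0 :=
        (mul_eq_zero.mp ((mul_eq_zero.mp hd').resolve_left h2)).resolve_left hα
      by_cases hN : a ^ 2 + α * b ^ 2 = 0
      · -- then a = b = 0, and g² = 1 gives a contradiction with division
        obtain ⟨ha, hb⟩ := key a b hN
        exfalso
        subst ha; subst hb
        set g : ℍ[F,-α,-β] := ⟨0, 0, c, d⟩ with hgdef
        have hsq : (g - 1) * (g + 1) = 0 := by
          rw [QuaternionAlgebra.ext_iff]
          simp only [hgdef, QuaternionAlgebra.re_mul, QuaternionAlgebra.imI_mul,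
            QuaternionAlgebra.imJ_mul, QuaternionAlgebra.imK_mul, QuaternionAlgebra.re_sub,
            QuaternionAlgebra.imI_sub, QuaternionAlgebra.imJ_sub, QuaternionAlgebra.imK_sub,
            QuaternionAlgebra.re_add, QuaternionAlgebra.imI_add, QuaternionAlgebra.imJ_add,
            QuaternionAlgebra.imK_add, QuaternionAlgebra.re_one, QuaternionAlgebra.imI_one,
            QuaternionAlgebra.imJ_one, QuaternionAlgebra.imK_one, QuaternionAlgebra.re_zero,
            QuaternionAlgebra.imI_zero, QuaternionAlgebra.imJ_zero, QuaternionAlgebra.imK_zero]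
          refine ⟨by linear_combination h1, by ring, by ring, by ring⟩
        have hne : g - 1 ≠ 0 := by
          intro h
          rw [sub_eq_zero, QuaternionAlgebra.ext_iff] at h
          simpa [hgdef] using h.1
        have := ((hdiv _ hne).mul_right_eq_zero).mp hsq
        rw [QuaternionAlgebra.ext_iff] at this
        have h1' := this.1
        simp only [hgdef, QuaternionAlgebra.re_add, QuaternionAlgebra.re_one,
          QuaternionAlgebra.re_zero] at h1'
        exact one_ne_zero (by linear_combination h1')
      · have hc0 : c = 0 := (mul_eq_zero.mp hc).resolve_right hN
        have hd0 : d = 0 := (mul_eq_zero.mp hd).resolve_right hN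
        subst hc0; subst hd0
        exact ⟨rfl, rfl, by linear_combination h1, by ring, by ring, by ring⟩
    · rintro ⟨hc, hd, hN1, -, -, -⟩
      have hc0 : c = 0 := hc
      have hd0 : d = 0 := hd
      subst hc0; subst hd0
      exact ⟨by ring, by linear_combination hN1, by ring, by ring⟩
  · rintro ⟨a, b, c, d⟩ hg
    constructor
    · rintro ⟨μ, hμ, heq⟩
      simp only [QuaternionAlgebra.ext_iff, QuaternionAlgebra.re_mul, QuaternionAlgebra.imI_mul,
        QuaternionAlgebra.imJ_mul, QuaternionAlgebra.imK_mul, QuaternionAlgebra.star_mk,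
        QuaternionAlgebra.re_coe, QuaternionAlgebra.imI_coe, QuaternionAlgebra.imJ_coe,
        QuaternionAlgebra.imK_coe] at heq
      obtain ⟨h0, h1, h2', h3⟩ := heq
      ring_nf at h1 h2' h3
      have hc' : (2 : F) * (c * (a ^ 2 + α * b ^ 2)) = 0 := by
        linear_combination a * h3 + b * h2'
      have hd' : (2 : F) * (α * (d * (a ^ 2 + α * b ^ 2))) = 0 := by
        linear_combination α * b * h3 - a * h2'
      have hc : c * (a ^ 2 + α * b ^ 2) = 0 := (mul_eq_zero.mp hc').resolve_left h2
      have hd : d * (a ^ 2 + α * b ^ 2) = 0 :=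
        (mul_eq_zero.mp ((mul_eq_zero.mp hd').resolve_left h2)).resolve_left hα
      by_cases hN : a ^ 2 + α * b ^ 2 = 0
      · obtain ⟨ha, hb⟩ := key a b hN
        exact Or.inr ⟨ha, hb⟩
      · exact Or.inl ⟨(mul_eq_zero.mp hc).resolve_right hN,
          (mul_eq_zero.mp hd).resolve_right hN⟩
    · rintro (⟨hc, hd⟩ | ⟨ha, hb⟩)
      · have hc0 : c = 0 := hc
        have hd0 : d = 0 := hd
        subst hc0; subst hd0
        refine ⟨a ^ 2 + α * b ^ 2, ?_, ?_⟩
        · intro h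
          obtain ⟨ha, hb⟩ := key a b h
          refine hg ?_
          rw [QuaternionAlgebra.ext_iff]
          simp [ha, hb]
        · rw [QuaternionAlgebra.ext_iff]
          simp only [QuaternionAlgebra.re_mul, QuaternionAlgebra.imI_mul,
            QuaternionAlgebra.imJ_mul, QuaternionAlgebra.imK_mul, QuaternionAlgebra.star_mk,
            QuaternionAlgebra.re_coe, QuaternionAlgebra.imI_coe, QuaternionAlgebra.imJ_coe,
            QuaternionAlgebra.imK_coe]
          refine ⟨by ring, by ring, by ring, by ring⟩
      · have ha0 : a = 0 := ha
        have hb0 : b = 0 := hb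
        subst ha0; subst hb0
        refine ⟨-β * (c ^ 2 + α * d ^ 2), ?_, ?_⟩
        · intro h
          have h' : c ^ 2 + α * d ^ 2 = 0 :=
            (mul_eq_zero.mp h).resolve_left (neg_ne_zero.mpr hβ)
          obtain ⟨hc, hd⟩ := key c d h'
          refine hg ?_
          rw [QuaternionAlgebra.ext_iff]
          simp [hc, hd]
        · rw [QuaternionAlgebra.ext_iff]
          simp only [QuaternionAlgebra.re_mul, QuaternionAlgebra.imI_mul,
            QuaternionAlgebra.imJ_mul, QuaternionAlgebra.imK_mul, QuaternionAlgebra.star_mk,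
            QuaternionAlgebra.re_coe, QuaternionAlgebra.imI_coe, QuaternionAlgebra.imJ_coe,
            QuaternionAlgebra.imK_coe]
          refine ⟨by ring, by ring, by ring, by ring⟩
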